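/- Let K > max{4, (1+R)/(1-R)} with 0 < R < 1, and let Λ ⊂ ℝ^d be a set such that for every x with |x| < 1 the ball B(x, R(1-|x|)) contains at least one point of Λ. Then for every j ≥ 2 and every x with |x| = 1 - K^{-(j-1)}, there exists λ_x ∈ Λ lying in the annulus {y : 1 - K^{-(j-1)} ≤ |y| ≤ 1 - K^{-j}} such that |x - λ_x| ≤ ((K-1)/K) · |x* - λ_x|, where x* = (ρ_{j+1}²/|x|²) x and ρ_{j+1} = 1 - K^{-(j+1)}. -/

import Mathlib

open Metric

set_option maxHeartbeats 2000000 in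
theorem stmt5 (d : ℕ) (R K : ℝ) (hR0 : 0 < R) (hR1 : R < 1)
    (hK : max 4 ((1 + R) / (1 - R)) < K)
    (Λ : Set (EuclideanSpace ℝ (Fin d)))
    (hdense : ∀ x : EuclideanSpace ℝ (Fin d), ‖x‖ < 1 → ∃ l ∈ Λ, dist x l < R * (1 - ‖x‖)) :
    ∀ j : ℕ, 2 ≤ j → ∀ x : EuclideanSpace ℝ (Fin d), ‖x‖ = 1 - K ^ (-(j:ℤ) + 1) →
      ∃ lx ∈ Λ,
        (1 - K ^ (-(j:ℤ) + 1) ≤ ‖lx‖ ∧ ‖lx‖ ≤ 1 - K ^ (-(j:ℤ))) ∧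
        ‖x - lx‖ ≤ (K - 1) / K * ‖((1 - K ^ (-(j:ℤ) - 1)) ^ 2 / ‖x‖ ^ 2) • x - lx‖ := by
  intro j hj x hx
  have hK4 : (4:ℝ) < K := (le_max_left _ _).trans_lt hK
  have hK0 : (0:ℝ) < K := by linarith
  have hKne : K ≠ 0 := ne_of_gt hK0
  have hR1' : (0:ℝ) < 1 - R := by linarith
  have hu : R * (K + 1) ≤ K - 1 := by
    have h := (le_max_right (4:ℝ) ((1 + R)/(1 - R))).trans_lt hK
    rw [div_lt_iff₀ hR1'] at h
    nlinarith
  set v : ℝ := K ^ (-(j:ℤ) - 1) with hv_def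
  have hv0 : 0 < v := zpow_pos hK0 _
  have hv1 : K ^ (-(j:ℤ)) = K * v := by
    rw [hv_def, ← zpow_one_add₀ hKne, show (1 + (-(j:ℤ) - 1)) = -(j:ℤ) by ring]
  have hv2 : K ^ (-(j:ℤ) + 1) = K ^ 2 * v := by
    have h : K ^ (-(j:ℤ) + 1) = K * (K * v) := by
      rw [← hv1, ← zpow_one_add₀ hKne, show (1 + -(j:ℤ)) = -(j:ℤ) + 1 by ring]
    rw [h]; ring
  have hKv : K ^ 3 * v ≤ 1 := by
    have e : K ^ 3 * v = K ^ ((2:ℤ) - j) := by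
      rw [hv_def, show ((2:ℤ) - j) = 3 + (-(j:ℤ) - 1) by ring, zpow_add₀ hKne,
        show ((3:ℤ)) = ((3:ℕ):ℤ) by norm_num, zpow_natCast]
    rw [e]
    calc K ^ ((2:ℤ) - j) ≤ K ^ (0:ℤ) :=
          zpow_le_zpow_right₀ (by linarith) (by omega)
      _ = 1 := zpow_zero K
  clear_value v
  have hxρ : ‖x‖ = 1 - K ^ 2 * v := by rw [hx, hv2]
  have hρ0 : 0 < 1 - K ^ 2 * v := by
    nlinarith [mul_nonneg (mul_nonneg (sq_nonneg K) hv0.le)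
      (show (0:ℝ) ≤ K - 4 by linarith)]
  set s : ℝ := 1 - (K + 1) * K * v / 2 with hs_def
  set r : ℝ := R * ((K + 1) * K * v / 2) with hr_def
  clear_value s r
  have hKKv : 0 < (K + 1) * K * v := by positivity
  have hs1 : s < 1 := by rw [hs_def]; linarith
  have hsρ : 1 - K ^ 2 * v ≤ s := by
    rw [hs_def]
    nlinarith [mul_nonneg (mul_nonneg (show (0:ℝ) ≤ K - 1 by linarith) hK0.le) hv0.le]
  have hs0 : 0 < s := by linarith
  have hxpos : 0 < ‖x‖ := by rw [hxρ]; exact hρ0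
  have hxne : ‖x‖ ≠ 0 := ne_of_gt hxpos
  set z : EuclideanSpace ℝ (Fin d) := (s / ‖x‖) • x with hz_def
  clear_value z
  have hzn : ‖z‖ = s := by
    rw [hz_def, norm_smul, Real.norm_eq_abs,
      abs_of_nonneg (div_nonneg hs0.le hxpos.le), div_mul_cancel₀ _ hxne]
  obtain ⟨l, hlΛ, hld⟩ := hdense z (by rw [hzn]; exact hs1)
  have hld' : dist z l < r := by
    have e : R * (1 - s) = r := by rw [hr_def, hs_def]; ring
    rw [hzn] at hld; linarith [hld, e.ge, e.le]
  have hD0 : 0 ≤ dist z l := dist_nonneg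
  have husk : 0 ≤ K - 1 - R * (K + 1) := by linarith
  refine ⟨l, hlΛ, ⟨?_, ?_⟩, ?_⟩
  · -- lower annulus bound
    rw [hv2]
    have h1 : ‖z‖ - ‖l‖ ≤ dist z l := by
      rw [dist_eq_norm]; exact norm_sub_norm_le z l
    rw [hzn] at h1
    have sr_low : 1 - K ^ 2 * v ≤ s - r := by
      rw [hs_def, hr_def]
      nlinarith [mul_nonneg (mul_nonneg husk hK0.le) hv0.le]
    linarith
  · -- upper annulus bound
    rw [hv1]
    have h1 : ‖l‖ - ‖z‖ ≤ dist z l := by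
      have h2 := norm_sub_norm_le l z
      rw [norm_sub_rev, ← dist_eq_norm] at h2
      exact h2
    rw [hzn] at h1
    have sr_up : s + r ≤ 1 - K * v := by
      rw [hs_def, hr_def]
      nlinarith [mul_nonneg (mul_nonneg husk hK0.le) hv0.le]
    linarith
  · -- main distance inequality
    set m : ℝ := (1 - v) ^ 2 / ‖x‖ ^ 2 with hm_def
    clear_value m
    have hq2 : (1 + K ^ 2 * v - 2 * v) * (1 - K ^ 2 * v) ≤ (1 - v) ^ 2 := by
      nlinarith [sq_nonneg (v * (K ^ 2 - 1))]
    have hsle : s ≤ 1 + K ^ 2 * v - 2 * v := by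
      rw [hs_def]
      nlinarith [mul_pos hv0 (show (0:ℝ) < 3 * K ^ 2 + K - 4 by nlinarith)]
    have hxz_eq : x - z = (1 - s / ‖x‖) • x := by
      rw [hz_def, sub_smul, one_smul]
    have hle : 1 - s / ‖x‖ ≤ 0 := by
      have hxs : ‖x‖ ≤ s := by rw [hxρ]; exact hsρ
      have : (1:ℝ) ≤ s / ‖x‖ := (one_le_div hxpos).mpr hxs
      linarith
    have hxz : ‖x - z‖ = s - ‖x‖ := by
      rw [hxz_eq, norm_smul, Real.norm_eq_abs, abs_of_nonpos hle, neg_sub,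
        sub_mul, div_mul_cancel₀ _ hxne, one_mul]
    have hms : s / ‖x‖ ≤ m := by
      rw [hm_def, hxρ, div_le_div_iff₀ hρ0 (by positivity)]
      nlinarith [mul_le_mul_of_nonneg_right hq2 hρ0.le,
        mul_le_mul_of_nonneg_right hsle (sq_nonneg (1 - K ^ 2 * v))]
    have hmz_eq : m • x - z = (m - s / ‖x‖) • x := by
      rw [hz_def, sub_smul]
    have hmz : ‖m • x - z‖ = m * ‖x‖ - s := by
      rw [hmz_eq, norm_smul, Real.norm_eq_abs, abs_of_nonneg (sub_nonneg.mpr hms),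
        sub_mul, div_mul_cancel₀ _ hxne]
    have tri1 : ‖x - l‖ ≤ (s - ‖x‖) + dist z l := by
      have h := dist_triangle x z l
      rw [dist_eq_norm, dist_eq_norm, hxz] at h
      rw [← dist_eq_norm] at h ⊢
      exact h
    have tri2 : (m * ‖x‖ - s) - dist z l ≤ ‖m • x - l‖ := by
      have h := dist_triangle (m • x) l z
      rw [dist_eq_norm (m • x) z, dist_eq_norm (m • x) l, dist_comm l z, hmz] at h
      linarith
    have hc0 : (0:ℝ) ≤ (K - 1) / K := div_nonneg (by linarith) hK0.le
    have hXlb : 1 + K ^ 2 * v - 2 * v ≤ m * ‖x‖ := by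
      rw [hm_def, hxρ]
      have e : (1 - v) ^ 2 / (1 - K ^ 2 * v) ^ 2 * (1 - K ^ 2 * v)
          = (1 - v) ^ 2 / (1 - K ^ 2 * v) := by
        field_simp
      rw [e, le_div_iff₀ hρ0]
      linarith
    have core : (s - ‖x‖) + r ≤ (K - 1) / K * ((m * ‖x‖ - s) - r) := by
      have step : (s - ‖x‖) + r ≤ (K - 1) / K * ((1 + K ^ 2 * v - 2 * v - s) - r) := by
        rw [hxρ, hs_def, hr_def, div_mul_eq_mul_div, le_div_iff₀ hK0]
        nlinarith [mul_nonneg (mul_nonneg (mul_nonneg husk hK0.le)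
            (show (0:ℝ) ≤ K - 2 by linarith)) hv0.le,
          mul_nonneg (mul_nonneg (mul_nonneg husk hK0.le)
            (show (0:ℝ) ≤ K + 1 by linarith)) hv0.le,
          mul_pos (mul_pos (show (0:ℝ) < K - 1 by linarith)
            (show (0:ℝ) < K - 2 by linarith)) hv0]
      have mono : (K - 1) / K * ((1 + K ^ 2 * v - 2 * v - s) - r)
          ≤ (K - 1) / K * ((m * ‖x‖ - s) - r) := by
        apply mul_le_mul_of_nonneg_left _ hc0
        linarith
      linarith
    calc ‖x - l‖ ≤ (s - ‖x‖) + r := by linarith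
      _ ≤ (K - 1) / K * ((m * ‖x‖ - s) - r) := core
      _ ≤ (K - 1) / K * ((m * ‖x‖ - s) - dist z l) := by
          apply mul_le_mul_of_nonneg_left _ hc0; linarith
      _ ≤ (K - 1) / K * ‖m • x - l‖ := mul_le_mul_of_nonneg_left tri2 hc0
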